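/- Let L be a finite uniquely atomistic lattice and let x = sup S and y = sup T be elements of L with their unique decompositions as joins of sets of atoms S and T. If x < y (x is strictly less than y), then S is a proper subset of T. -/
import Mathlib


/-- In a finite uniquely atomistic lattice, if `x = sup S` and `y = sup T`
are the unique decompositions as joins of sets of atoms and `x < y`, then `S ⊂ T`. -/
theorem ssubset_of_lt_of_uniquelyAtomistic
    {α : Type*} [Lattice α] [OrderBot α] [Fintype α]
    (hua : ∀ x : α, ∃! S : Finset α, (∀ a ∈ S, IsAtom a) ∧ x = S.sup id)
    (x y : α) (S T : Finset α)
    (hSatoms : ∀ a ∈ S, IsAtom a) (hxS : x = S.sup id)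
    (hTatoms : ∀ a ∈ T, IsAtom a) (hyT : y = T.sup id)
    (hlt : x < y) :
    S ⊂ T := by
  classical
  obtain ⟨U, _, hUuniq⟩ := hua y
  have hST : S ∪ T = T := by
    have h1 : S ∪ T = U := hUuniq (S ∪ T)
      ⟨fun a ha => (Finset.mem_union.mp ha).elim (hSatoms a) (hTatoms a), by
        rw [Finset.sup_union, ← hxS, ← hyT]
        exact (sup_eq_right.mpr hlt.le).symm⟩
    have h2 : T = U := hUuniq T ⟨hTatoms, hyT⟩
    rw [h1, h2]
  refine ⟨fun a ha => hST ▸ Finset.mem_union_left T ha, fun hTS => ?_⟩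
  have : S = T := subset_antisymm (fun a ha => hST ▸ Finset.mem_union_left T ha) hTS
  exact hlt.ne (by rw [hxS, hyT, this])
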